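/- For every open dense set U ⊆ ω^ω × ω^ω and all nonempty open sets V₁, V₂ ⊆ ω^ω there exist finite sequences σ₁, σ₂ of natural numbers with [σ₁] ⊆ V₁, [σ₂] ⊆ V₂, |σ₁| = |σ₂|, [σ₁] × [σ₂] ⊆ U, and [σ₂] × [σ₁] ⊆ U. -/
import Mathlib

open Set

/-- The basic clopen set of all elements of Baire space extending the finite sequence `σ`. -/
def cyl (σ : List ℕ) : Set (ℕ → ℕ) :=
  {x | ∀ i : Fin σ.length, x i = σ.get i}

lemma cyl_ofFn (x : ℕ → ℕ) (n : ℕ) :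
    cyl (List.ofFn fun i : Fin n => x i) = PiNat.cylinder x n := by
  ext y
  simp only [cyl, PiNat.cylinder, mem_setOf_eq]
  constructor
  · intro h i hi
    have := h ⟨i, by simp [hi]⟩
    simpa [List.get_ofFn] using this
  · intro h i
    have hi : (i : ℕ) < n := by simpa using i.2
    simp [List.get_ofFn, h _ hi]

lemma exists_cylinder_subset {W : Set (ℕ → ℕ)} (hW : IsOpen W) {x : ℕ → ℕ} (hx : x ∈ W) :
    ∃ n, PiNat.cylinder x n ⊆ W := by
  obtain ⟨s, ⟨y, n, rfl⟩, hxs, hsW⟩ :=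
    (PiNat.isTopologicalBasis_cylinders (fun _ : ℕ => ℕ)).exists_subset_of_mem_open hx hW
  exact ⟨n, by rw [PiNat.mem_cylinder_iff_eq.1 hxs]; exact hsW⟩

lemma exists_cylinder_prod_subset {U : Set ((ℕ → ℕ) × (ℕ → ℕ))} (hU : IsOpen U)
    {x y : ℕ → ℕ} (hxy : (x, y) ∈ U) :
    ∃ n, PiNat.cylinder x n ×ˢ PiNat.cylinder y n ⊆ U := by
  obtain ⟨u, v, hu, hv, hxu, hyv, huv⟩ := isOpen_prod_iff.1 hU x y hxy
  obtain ⟨n₁, h₁⟩ := exists_cylinder_subset hu hxu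
  obtain ⟨n₂, h₂⟩ := exists_cylinder_subset hv hyv
  refine ⟨max n₁ n₂, ?_⟩
  refine Subset.trans (prod_mono ?_ ?_) huv
  · exact (PiNat.cylinder_anti x (le_max_left _ _)).trans h₁
  · exact (PiNat.cylinder_anti y (le_max_right _ _)).trans h₂

theorem pair_of_cylinders_in_open_dense
    (U : Set ((ℕ → ℕ) × (ℕ → ℕ))) (hUo : IsOpen U) (hUd : Dense U)
    (V₁ V₂ : Set (ℕ → ℕ)) (hV₁ : IsOpen V₁) (hV₁n : V₁.Nonempty)
    (hV₂ : IsOpen V₂) (hV₂n : V₂.Nonempty) :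
    ∃ σ₁ σ₂ : List ℕ, cyl σ₁ ⊆ V₁ ∧ cyl σ₂ ⊆ V₂ ∧ σ₁.length = σ₂.length ∧
      cyl σ₁ ×ˢ cyl σ₂ ⊆ U ∧ cyl σ₂ ×ˢ cyl σ₁ ⊆ U := by
  obtain ⟨x₁, hx₁⟩ := hV₁n
  obtain ⟨x₂, hx₂⟩ := hV₂n
  obtain ⟨n₁, hn₁⟩ := exists_cylinder_subset hV₁ hx₁
  obtain ⟨n₂, hn₂⟩ := exists_cylinder_subset hV₂ hx₂
  set n := max n₁ n₂ with hn
  have hc₁ : PiNat.cylinder x₁ n ⊆ V₁ := (PiNat.cylinder_anti x₁ (le_max_left _ _)).trans hn₁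
  have hc₂ : PiNat.cylinder x₂ n ⊆ V₂ := (PiNat.cylinder_anti x₂ (le_max_right _ _)).trans hn₂
  -- step 1
  have hopen1 : IsOpen (PiNat.cylinder x₁ n ×ˢ PiNat.cylinder x₂ n) :=
    (PiNat.isOpen_cylinder _ _ _).prod (PiNat.isOpen_cylinder _ _ _)
  have hne1 : (PiNat.cylinder x₁ n ×ˢ PiNat.cylinder x₂ n).Nonempty :=
    ⟨(x₁, x₂), PiNat.self_mem_cylinder _ _, PiNat.self_mem_cylinder _ _⟩
  obtain ⟨⟨y₁, y₂⟩, hyP, hyU⟩ := hUd.inter_open_nonempty _ hopen1 hne1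
  obtain ⟨m₀, hm₀⟩ := exists_cylinder_prod_subset hUo hyU
  set m := max m₀ n with hm
  have hym : PiNat.cylinder y₁ m ×ˢ PiNat.cylinder y₂ m ⊆ U :=
    (prod_mono (PiNat.cylinder_anti _ (le_max_left _ _))
      (PiNat.cylinder_anti _ (le_max_left _ _))).trans hm₀
  have hy₁V : PiNat.cylinder y₁ m ⊆ V₁ := by
    refine (PiNat.cylinder_anti _ (le_max_right m₀ n)).trans ?_
    rw [PiNat.mem_cylinder_iff_eq.1 hyP.1]
    exact hc₁
  have hy₂V : PiNat.cylinder y₂ m ⊆ V₂ := by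
    refine (PiNat.cylinder_anti _ (le_max_right m₀ n)).trans ?_
    rw [PiNat.mem_cylinder_iff_eq.1 hyP.2]
    exact hc₂
  -- step 2: swapped
  have hopen2 : IsOpen (PiNat.cylinder y₂ m ×ˢ PiNat.cylinder y₁ m) :=
    (PiNat.isOpen_cylinder _ _ _).prod (PiNat.isOpen_cylinder _ _ _)
  have hne2 : (PiNat.cylinder y₂ m ×ˢ PiNat.cylinder y₁ m).Nonempty :=
    ⟨(y₂, y₁), PiNat.self_mem_cylinder _ _, PiNat.self_mem_cylinder _ _⟩
  obtain ⟨⟨z₂, z₁⟩, hzP, hzU⟩ := hUd.inter_open_nonempty _ hopen2 hne2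
  obtain ⟨k₀, hk₀⟩ := exists_cylinder_prod_subset hUo hzU
  set k := max k₀ m with hk
  have hzk : PiNat.cylinder z₂ k ×ˢ PiNat.cylinder z₁ k ⊆ U :=
    (prod_mono (PiNat.cylinder_anti _ (le_max_left _ _))
      (PiNat.cylinder_anti _ (le_max_left _ _))).trans hk₀
  have hz₁y : PiNat.cylinder z₁ k ⊆ PiNat.cylinder y₁ m := by
    refine (PiNat.cylinder_anti _ (le_max_right k₀ m)).trans ?_
    rw [PiNat.mem_cylinder_iff_eq.1 hzP.2]
  have hz₂y : PiNat.cylinder z₂ k ⊆ PiNat.cylinder y₂ m := by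
    refine (PiNat.cylinder_anti _ (le_max_right k₀ m)).trans ?_
    rw [PiNat.mem_cylinder_iff_eq.1 hzP.1]
  refine ⟨List.ofFn fun i : Fin k => z₁ i, List.ofFn fun i : Fin k => z₂ i, ?_, ?_, ?_, ?_, ?_⟩
  · rw [cyl_ofFn]; exact hz₁y.trans hy₁V
  · rw [cyl_ofFn]; exact hz₂y.trans hy₂V
  · simp
  · rw [cyl_ofFn, cyl_ofFn]
    exact (prod_mono hz₁y hz₂y).trans hym
  · rw [cyl_ofFn, cyl_ofFn]
    exact hzk
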